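/- (Correctness of the state-transition transformation.) Let ⟨N, S, p, r, μ0⟩ be a finite-horizon Markov reward process with N ≥ 1 and let ⟨N−1, S × S, p†, r†, μ0†⟩ be its state-transition transformation. Then for every function f : ℝ → ℝ, Σ_{ω : Fin(N+1)→S} μ0(ω 0) · (∏_{t=0}^{N-1} p (ω t) (ω (t+1))) · f( Σ_{t=0}^{N-1} r (ω t) (ω (t+1)) ) = Σ_{ω† : Fin N → S×S} μ0†(ω† 0) · (∏_{t=0}^{N-2} p† (ω† t) (ω† (t+1))) · f( Σ_{t=0}^{N-1} r† (ω† t) ); that is, the distribution of the total reward of the transformed process coincides with the distribution of the total reward of the original process. -/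

import Mathlib

/-- Correctness of the state-transition transformation: for a finite-horizon Markov
reward process with horizon `N = M + 1 ≥ 1`, and its transformed process with horizon
`M = N − 1`, state space `S × S`, reward `r†(x,y) = r x y`, kernel
`p† (w,x) (x',y) = if x' = x then p x y else 0`, and initial distribution
`μ0†(x,y) = μ0 x * p x y`, the expectation of `f` applied to the total reward is the
same for both processes, for every `f : ℝ → ℝ`; i.e. the total-reward distributions
coincide. -/
theorem stateTransitionTransformation_totalReward_distribution_eq
    {S : Type} [Fintype S] [Nonempty S] [DecidableEq S]
    (M : ℕ)
    (p : S → S → ℝ) (hp0 : ∀ x y, 0 ≤ p x y) (hp1 : ∀ x, ∑ y, p x y = 1)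
    (r : S → S → ℝ)
    (μ0 : S → ℝ) (hμ0 : ∀ x, 0 ≤ μ0 x) (hμ1 : ∑ x, μ0 x = 1)
    (f : ℝ → ℝ) :
    (∑ ω : Fin (M + 2) → S,
        μ0 (ω 0) * (∏ t : Fin (M + 1), p (ω t.castSucc) (ω t.succ)) *
          f (∑ t : Fin (M + 1), r (ω t.castSucc) (ω t.succ)))
    = ∑ ω' : Fin (M + 1) → S × S,
        (μ0 (ω' 0).1 * p (ω' 0).1 (ω' 0).2) *
          (∏ t : Fin M,
            (if (ω' t.succ).1 = (ω' t.castSucc).2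
              then p (ω' t.castSucc).2 (ω' t.succ).2 else 0)) *
          f (∑ t : Fin (M + 1), r (ω' t).1 (ω' t).2) := by
  classical
  set e : (Fin (M + 2) → S) → (Fin (M + 1) → S × S) :=
    fun ω t => (ω t.castSucc, ω t.succ) with he
  -- every "consistent" ω' is in the image of e
  have hsurj : ∀ ω' : Fin (M + 1) → S × S,
      (∀ t : Fin M, (ω' t.succ).1 = (ω' t.castSucc).2) → ∃ ω, e ω = ω' := by
    intro ω' hc
    refine ⟨fun i => if h : (i : ℕ) ≤ M then (ω' ⟨i, Nat.lt_succ_of_le h⟩).1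
      else (ω' ⟨M, Nat.lt_succ_self M⟩).2, ?_⟩
    funext t
    have h1 : (t.castSucc : ℕ) ≤ M := Nat.lt_succ_iff.mp t.isLt
    simp only [he]
    ext
    · simp only [dif_pos h1]
      exact congrArg (fun z : S × S => z.1) (congrArg ω' (Fin.ext rfl))
    · simp only [Fin.val_succ]
      by_cases h2 : (t : ℕ) + 1 ≤ M
      · rw [dif_pos h2]
        have ht : (t : ℕ) < M := h2
        have := hc ⟨t, ht⟩
        have e1 : (⟨(t : ℕ) + 1, Nat.lt_succ_of_le h2⟩ : Fin (M+1)) = (⟨t, ht⟩ : Fin M).succ := rfl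
        have e2 : ((⟨t, ht⟩ : Fin M).castSucc : Fin (M+1)) = t := Fin.ext rfl
        rw [e1, this, e2]
      · rw [dif_neg h2]
        have ht : (t : ℕ) = M := le_antisymm h1 (by omega)
        have : (⟨M, Nat.lt_succ_self M⟩ : Fin (M + 1)) = t := by
          apply Fin.ext
          simp [ht]
        rw [this]
  have hinj : Function.Injective e := by
    intro a b hab
    funext i
    rcases Fin.eq_castSucc_or_eq_last i with ⟨j, rfl⟩ | rfl
    · have := congrFun hab j
      exact congrArg Prod.fst this
    · have := congrFun hab (Fin.last M)
      have h2 := congrArg Prod.snd this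
      simpa [he, Fin.succ_last] using h2
  set G : (Fin (M + 1) → S × S) → ℝ := fun ω' =>
      (μ0 (ω' 0).1 * p (ω' 0).1 (ω' 0).2) *
        (∏ t : Fin M,
          (if (ω' t.succ).1 = (ω' t.castSucc).2
            then p (ω' t.castSucc).2 (ω' t.succ).2 else 0)) *
        f (∑ t : Fin (M + 1), r (ω' t).1 (ω' t).2) with hG
  have h1 : ∑ ω' ∈ Finset.univ.image e, G ω' = ∑ ω : Fin (M + 2) → S, G (e ω) :=
    Finset.sum_image (fun a _ b _ h => hinj h)
  have h2 : ∑ ω' ∈ Finset.univ.image e, G ω' = ∑ ω' : Fin (M + 1) → S × S, G ω' := by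
    apply Finset.sum_subset (Finset.subset_univ _)
    intro ω' _ hω'
    simp only [hG]
    have : ¬ ∀ t : Fin M, (ω' t.succ).1 = (ω' t.castSucc).2 := by
      intro hc
      obtain ⟨ω, hω⟩ := hsurj ω' hc
      exact hω' (Finset.mem_image.mpr ⟨ω, Finset.mem_univ ω, hω⟩)
    push_neg at this
    obtain ⟨t, ht⟩ := this
    have hz : (∏ t : Fin M, if (ω' t.succ).1 = (ω' t.castSucc).2
        then p (ω' t.castSucc).2 (ω' t.succ).2 else 0) = (0 : ℝ) :=
      Finset.prod_eq_zero (Finset.mem_univ t) (if_neg ht)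
    rw [hz]
    ring
  rw [← h2, h1]
  apply Finset.sum_congr rfl
  intro ω _
  simp only [hG]
  have hprod : (∏ t : Fin (M + 1), p (ω t.castSucc) (ω t.succ))
      = p (ω 0) (ω 1) * ∏ t : Fin M,
          p (ω t.succ.castSucc) (ω t.succ.succ) := by
    rw [Fin.prod_univ_succ]
    rfl
  have hif : ∀ t : Fin M, ((e ω) t.succ).1 = ((e ω) t.castSucc).2 := by
    intro t
    show ω t.succ.castSucc = ω t.castSucc.succ
    exact congrArg ω (Fin.ext rfl)
  have key : (μ0 ((e ω) 0).1 * p ((e ω) 0).1 ((e ω) 0).2) *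
      (∏ t : Fin M,
        (if ((e ω) t.succ).1 = ((e ω) t.castSucc).2
          then p ((e ω) t.castSucc).2 ((e ω) t.succ).2 else 0))
      = μ0 (ω 0) * (∏ t : Fin (M + 1), p (ω t.castSucc) (ω t.succ)) := by
    rw [hprod]
    have hpc : (∏ t : Fin M,
        (if ((e ω) t.succ).1 = ((e ω) t.castSucc).2
          then p ((e ω) t.castSucc).2 ((e ω) t.succ).2 else 0))
        = ∏ t : Fin M, p (ω t.succ.castSucc) (ω t.succ.succ) := by
      apply Finset.prod_congr rfl
      intro t _
      rw [if_pos (hif t)]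
      show p (ω t.castSucc.succ) (ω t.succ.succ) = _
      rw [Fin.succ_castSucc]
    rw [hpc]
    show μ0 (ω 0) * p (ω 0) (ω 1) * _ = _
    ring
  rw [key]
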